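/- Let V be a finite set and f : 2^V → ℝ be monotone (f(A) ≤ f(B) whenever A ⊆ B), submodular (f(A ∪ B) + f(A ∩ B) ≤ f(A) + f(B) for all A, B ⊆ V), and satisfy f(∅) ≥ 0. Let T ⊆ V with |T| = m and let 1 ≤ k ≤ m. If S is a uniformly random k-element subset of T, then E[f(S)] ≥ (k/m) · f(T). -/

import Mathlib

set_option autoImplicit false

/-- Sum of top marginals of a submodular function is at most the total value. -/
lemma submod_marg_sum {V : Type*} [DecidableEq V] (f : Finset V → ℝ)
    (hsub : ∀ A B : Finset V, f (A ∪ B) + f (A ∩ B) ≤ f A + f B) :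
    ∀ S : Finset V, ∑ x ∈ S, (f S - f (S.erase x)) ≤ f S - f ∅ := by
  intro S
  induction S using Finset.induction_on with
  | empty => simp
  | @insert a s ha ih =>
    rw [Finset.sum_insert ha, Finset.erase_insert ha]
    have hbd : ∀ x ∈ s, f (insert a s) - f ((insert a s).erase x)
        ≤ f s - f (s.erase x) := by
      intro x hx
      have hax : a ≠ x := fun h => ha (h ▸ hx)
      rw [Finset.erase_insert_of_ne hax]
      have hu : s ∪ insert a (s.erase x) = insert a s := by
        ext y; simp only [Finset.mem_union, Finset.mem_insert, Finset.mem_erase]; tauto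
      have hi : s ∩ insert a (s.erase x) = s.erase x := by
        ext y
        simp only [Finset.mem_inter, Finset.mem_insert, Finset.mem_erase]
        constructor
        · rintro ⟨hy, h | h⟩
          · exact absurd (h ▸ hy) ha
          · exact h
        · rintro ⟨h1, h2⟩; exact ⟨h2, Or.inr ⟨h1, h2⟩⟩
      have := hsub s (insert a (s.erase x))
      rw [hu, hi] at this
      linarith
    calc (f (insert a s) - f s) + ∑ x ∈ s, (f (insert a s) - f ((insert a s).erase x))
        ≤ (f (insert a s) - f s) + ∑ x ∈ s, (f s - f (s.erase x)) := by
          exact add_le_add_right (Finset.sum_le_sum hbd) _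
      _ ≤ (f (insert a s) - f s) + (f s - f ∅) := by linarith [ih]
      _ = f (insert a s) - f ∅ := by ring

/-- Double counting of pairs (S, x) with x ∈ S, |S| = j+1. -/
lemma double_count {V : Type*} [DecidableEq V] (f : Finset V → ℝ) (T : Finset V) (j : ℕ) :
    ∑ S ∈ T.powersetCard (j+1), ∑ x ∈ S, f (S.erase x)
      = ∑ A ∈ T.powersetCard j, ((T \ A).card : ℝ) * f A := by
  rw [Finset.sum_sigma']
  have : ∀ A ∈ T.powersetCard j, ((T \ A).card : ℝ) * f A = ∑ x ∈ T \ A, f A := by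
    intro A hA; rw [Finset.sum_const, nsmul_eq_mul]
  rw [Finset.sum_congr rfl this, Finset.sum_sigma']
  apply Finset.sum_nbij' (i := fun p => (⟨p.1.erase p.2, p.2⟩ : Σ _ : Finset V, V))
    (j := fun q => (⟨insert q.2 q.1, q.2⟩ : Σ _ : Finset V, V))
  · rintro ⟨S, x⟩ hp
    rw [Finset.mem_sigma] at hp ⊢
    obtain ⟨hS, hx⟩ := hp
    rw [Finset.mem_powersetCard] at hS
    refine ⟨Finset.mem_powersetCard.2 ⟨(Finset.erase_subset _ _).trans hS.1, ?_⟩, ?_⟩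
    · rw [Finset.card_erase_of_mem hx, hS.2]; omega
    · exact Finset.mem_sdiff.2 ⟨hS.1 hx, Finset.notMem_erase _ _⟩
  · rintro ⟨A, x⟩ hq
    rw [Finset.mem_sigma] at hq ⊢
    obtain ⟨hA, hx⟩ := hq
    rw [Finset.mem_powersetCard] at hA
    rw [Finset.mem_sdiff] at hx
    refine ⟨Finset.mem_powersetCard.2 ⟨Finset.insert_subset hx.1 hA.1, ?_⟩, Finset.mem_insert_self _ _⟩
    rw [Finset.card_insert_of_notMem hx.2, hA.2]
  · rintro ⟨S, x⟩ hp
    rw [Finset.mem_sigma] at hp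
    simp only [Sigma.mk.inj_iff, heq_eq_eq]
    exact ⟨Finset.insert_erase hp.2, trivial⟩
  · rintro ⟨A, x⟩ hq
    rw [Finset.mem_sigma, Finset.mem_sdiff] at hq
    simp only [Sigma.mk.inj_iff, heq_eq_eq]
    exact ⟨Finset.erase_insert hq.2.2, trivial⟩
  · rintro ⟨S, x⟩ hp; rfl

/-- **Random subsets of monotone submodular functions.**
Let `f : 2^V → ℝ` be monotone, submodular, with `f ∅ ≥ 0`. Let `T ⊆ V` with `|T| = m`
and `1 ≤ k ≤ m`. If `S` is a uniformly random `k`-element subset of `T`, then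
`E[f(S)] ≥ (k/m) · f(T)`. -/
theorem random_subset_submodular
    {V : Type*} [DecidableEq V]
    (f : Finset V → ℝ)
    (hmono : ∀ A B : Finset V, A ⊆ B → f A ≤ f B)
    (hsub : ∀ A B : Finset V, f (A ∪ B) + f (A ∩ B) ≤ f A + f B)
    (h0 : 0 ≤ f ∅)
    (T : Finset V) (m k : ℕ) (hm : T.card = m) (hk1 : 1 ≤ k) (hkm : k ≤ m) :
    ((k : ℝ) / m) * f T
      ≤ (∑ S ∈ T.powersetCard k, f S) / ((T.powersetCard k).card : ℝ) := by
  have hfnn : ∀ A : Finset V, 0 ≤ f A := fun A =>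
    le_trans h0 (hmono ∅ A (Finset.empty_subset A))
  -- step inequality: j * Σ_{j+1} ≤ (m - j) * Σ_j
  have hstep : ∀ j : ℕ, j < m →
      (j : ℝ) * ∑ S ∈ T.powersetCard (j+1), f S
        ≤ ((m - j : ℕ) : ℝ) * ∑ S ∈ T.powersetCard j, f S := by
    intro j hj
    have hdc := double_count f T j
    have h1 : (j : ℝ) * ∑ S ∈ T.powersetCard (j+1), f S
        ≤ ∑ S ∈ T.powersetCard (j+1), ∑ x ∈ S, f (S.erase x) := by
      rw [Finset.mul_sum]
      refine Finset.sum_le_sum ?_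
      intro S hS
      rw [Finset.mem_powersetCard] at hS
      have hms := submod_marg_sum f hsub S
      have hcard : ∑ x ∈ S, f S = ((j : ℝ) + 1) * f S := by
        rw [Finset.sum_const, nsmul_eq_mul, hS.2]; push_cast; ring
      have : ∑ x ∈ S, (f S - f (S.erase x))
          = ((j : ℝ) + 1) * f S - ∑ x ∈ S, f (S.erase x) := by
        rw [Finset.sum_sub_distrib, hcard]
      rw [this] at hms
      linarith
    have h2 : ∑ A ∈ T.powersetCard j, ((T \ A).card : ℝ) * f A
        = ((m - j : ℕ) : ℝ) * ∑ A ∈ T.powersetCard j, f A := by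
      rw [Finset.mul_sum]
      refine Finset.sum_congr rfl ?_
      intro A hA
      rw [Finset.mem_powersetCard] at hA
      rw [Finset.card_sdiff_of_subset hA.1, hA.2, hm]
    rw [hdc, h2] at h1
    exact h1
  -- main induction
  have key : ∀ j : ℕ, k ≤ j → j ≤ m →
      (k : ℝ) / j * ((∑ S ∈ T.powersetCard j, f S) / (m.choose j : ℝ))
        ≤ (∑ S ∈ T.powersetCard k, f S) / (m.choose k : ℝ) := by
    intro j hkj
    induction j, hkj using Nat.le_induction with
    | base =>
      intro _
      have hk0 : (k : ℝ) ≠ 0 := by positivity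
      rw [div_self hk0, one_mul]
    | succ j hkj ih =>
      intro hj1m
      have hjm : j < m := hj1m
      have ihj := ih hjm.le
      refine le_trans ?_ ihj
      have hj0 : (0 : ℝ) < j := by
        have : 1 ≤ j := le_trans hk1 hkj
        exact_mod_cast this
      have hc1 : (0 : ℝ) < (m.choose j : ℝ) := by
        exact_mod_cast Nat.choose_pos hjm.le
      have hc2 : (0 : ℝ) < (m.choose (j+1) : ℝ) := by
        exact_mod_cast Nat.choose_pos hj1m
      have hid : ((m.choose (j+1) : ℝ)) * ((j : ℝ) + 1)
          = (m.choose j : ℝ) * ((m - j : ℕ) : ℝ) := by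
        exact_mod_cast Nat.choose_succ_right_eq m j
      have hs := hstep j hjm
      have hSnn : (0 : ℝ) ≤ ∑ S ∈ T.powersetCard j, f S :=
        Finset.sum_nonneg fun S _ => hfnn S
      have hkpos : (0 : ℝ) < k := by exact_mod_cast hk1
      rw [div_mul_div_comm, div_mul_div_comm,
        div_le_div_iff₀ (by positivity) (by positivity)]
      push_cast
      nlinarith [mul_le_mul_of_nonneg_left hs (le_of_lt hkpos),
        mul_nonneg hSnn (le_of_lt hkpos), hc1.le, hc2.le]
  have hfin := key m hkm le_rfl
  have hpm : T.powersetCard m = {T} := by rw [← hm, Finset.powersetCard_self]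
  rw [hpm, Finset.sum_singleton, Nat.choose_self] at hfin
  have hcardk : ((T.powersetCard k).card : ℝ) = (m.choose k : ℝ) := by
    rw [Finset.card_powersetCard, hm]
  rw [hcardk]
  simpa using hfin
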